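/- Let k be a positive integer, C a k-qubit Clifford operation, and j ∈ {1,…,k}. Then there exists a string t ∈ {0,+,↻}^k such that the j-th qubit of C|t⟩ is in a standard basis state; that is, C|t⟩ = |φ_0⟩|a⟩|φ_1⟩ for some bit a ∈ {0,1} and pure states |φ_0⟩ on j−1 qubits and |φ_1⟩ on k−j qubits. -/

import Mathlib

open Matrix Complex ComplexOrder

noncomputable section

def pX : Matrix (Fin 2) (Fin 2) ℂ := !![0, 1; 1, 0]
def pZ : Matrix (Fin 2) (Fin 2) ℂ := !![1, 0; 0, -1]

def pauli : Fin 4 → Matrix (Fin 2) (Fin 2) ℂ :=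
  ![1, pX, !![0, -Complex.I; Complex.I, 0], pZ]

/-- The Pauli operator `X^a Z^b` on `k` qubits. -/
def XZ (k : ℕ) (a b : Fin k → Fin 2) : Matrix (Fin k → Fin 2) (Fin k → Fin 2) ℂ :=
  Matrix.of fun x y => ∏ j, (pX ^ (a j).val * pZ ^ (b j).val) (x j) (y j)

/-- Membership in the `k`-qubit Pauli group. -/
def InPauliGroup {k : ℕ} (A : Matrix (Fin k → Fin 2) (Fin k → Fin 2) ℂ) : Prop :=
  ∃ (α : ℂ) (a b : Fin k → Fin 2),
    α ∈ ({1, Complex.I, -1, -Complex.I} : Set ℂ) ∧ A = α • XZ k a b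

/-- A `k`-qubit Clifford operation: a unitary normalizing the Pauli group. -/
def IsClifford {k : ℕ} (C : Matrix (Fin k → Fin 2) (Fin k → Fin 2) ℂ) : Prop :=
  Cᴴ * C = 1 ∧ ∀ A, InPauliGroup A → InPauliGroup (C * A * Cᴴ)

/-- The single-qubit states `|0⟩`, `|+⟩ = (|0⟩+|1⟩)/√2`,
`|↻⟩ = (|0⟩−i|1⟩)/√2` (eigenvectors of `Z`, `X`, `Y` respectively). -/
def trapState : Fin 3 → (Fin 2 → ℂ) :=
  ![![1, 0],
    ![1/(Real.sqrt 2 : ℂ), 1/(Real.sqrt 2 : ℂ)],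
    ![1/(Real.sqrt 2 : ℂ), -Complex.I/(Real.sqrt 2 : ℂ)]]

/-- The product state `|t⟩` for `t ∈ {0,+,↻}^k`. -/
def ketTrap {k : ℕ} (t : Fin k → Fin 3) : (Fin k → Fin 2) → ℂ :=
  fun x => ∏ i, trapState (t i) (x i)

/-- The operator `I^{⊗(j−1)} ⊗ Z ⊗ I^{⊗(k−j)}`: Pauli `Z` on qubit `j`. -/
def Zat {k : ℕ} (j : Fin k) : Matrix (Fin k → Fin 2) (Fin k → Fin 2) ℂ :=
  Matrix.of fun x y => if x = y then (if x j = 1 then -1 else 1) else 0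

-- helpers
def trapIdx : Fin 2 → Fin 2 → Fin 3 := fun a b => if a = 0 then 0 else if b = 0 then 1 else 2
def trapEig : Fin 2 → Fin 2 → ℂ := fun a b => if a = 0 then 1 else if b = 0 then 1 else Complex.I

lemma fin2cases (v : Fin 2) : v = 0 ∨ v = 1 := by fin_cases v <;> simp

lemma pZ_diag (v : Fin 2) : pZ v v = if v = 1 then (-1:ℂ) else 1 := by
  fin_cases v <;> simp [pZ]

lemma pZ_off (u v : Fin 2) (h : u ≠ v) : pZ u v = 0 := by
  fin_cases u <;> fin_cases v <;> simp_all [pZ]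

lemma single_eig (a b : Fin 2) :
    (pX ^ a.val * pZ ^ b.val).mulVec (trapState (trapIdx a b)) =
      trapEig a b • trapState (trapIdx a b) := by
  fin_cases a <;> fin_cases b <;> funext x <;> fin_cases x <;>
    simp [pX, pZ, trapState, trapIdx, trapEig, Matrix.mulVec, dotProduct,
      Fin.sum_univ_two, Matrix.mul_apply, pow_succ, Complex.I_sq] <;> ring_nf <;> simp [Complex.I_sq]

lemma XZ_mulVec {k : ℕ} (a b : Fin k → Fin 2) :
    (XZ k a b).mulVec (ketTrap fun i => trapIdx (a i) (b i)) =
      (∏ i, trapEig (a i) (b i)) • ketTrap fun i => trapIdx (a i) (b i) := by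
  funext x
  have key : ∀ i : Fin k, (∑ c : Fin 2,
      (pX ^ (a i).val * pZ ^ (b i).val) (x i) c * trapState (trapIdx (a i) (b i)) c)
      = trapEig (a i) (b i) * trapState (trapIdx (a i) (b i)) (x i) := by
    intro i
    have h := congrFun (single_eig (a i) (b i)) (x i)
    simpa [Matrix.mulVec, dotProduct] using h
  calc (XZ k a b).mulVec (ketTrap fun i => trapIdx (a i) (b i)) x
      = ∑ y : Fin k → Fin 2, ∏ i,
          ((pX ^ (a i).val * pZ ^ (b i).val) (x i) (y i) *
            trapState (trapIdx (a i) (b i)) (y i)) := by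
        simp [Matrix.mulVec, dotProduct, XZ, ketTrap, Finset.prod_mul_distrib]
    _ = ∏ i, ∑ c : Fin 2, (pX ^ (a i).val * pZ ^ (b i).val) (x i) c *
          trapState (trapIdx (a i) (b i)) c :=
        (Fintype.prod_sum fun i c => (pX ^ (a i).val * pZ ^ (b i).val) (x i) c *
          trapState (trapIdx (a i) (b i)) c).symm
    _ = ∏ i, trapEig (a i) (b i) * trapState (trapIdx (a i) (b i)) (x i) := by
        exact Finset.prod_congr rfl fun i _ => key i
    _ = (∏ i, trapEig (a i) (b i)) * ∏ i, trapState (trapIdx (a i) (b i)) (x i) :=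
        Finset.prod_mul_distrib
    _ = _ := by simp [ketTrap]

lemma Zat_eq {k : ℕ} (j : Fin k) :
    Zat j = XZ k 0 (fun i => if i = j then 1 else 0) := by
  ext x y
  simp only [XZ, Matrix.of_apply, Pi.zero_apply, Fin.val_zero, pow_zero, one_mul, Zat]
  by_cases hxy : x = y
  · subst hxy
    rw [if_pos rfl, Finset.prod_eq_single j]
    · simp [pZ_diag]
    · intro i _ hij
      simp [hij, Matrix.one_apply_eq]
    · simp
  · rw [if_neg hxy]
    obtain ⟨i, hi⟩ : ∃ i, x i ≠ y i := by
      by_contra h; push_neg at h; exact hxy (funext h)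
    symm
    apply Finset.prod_eq_zero (Finset.mem_univ i)
    by_cases hij : i = j
    · subst hij
      simpa using pZ_off _ _ hi
    · simp [hij, Matrix.one_apply_ne hi]

/-- for every `k`-qubit Clifford operation `C` and every
`j ∈ {1,…,k}`, there is a string `t ∈ {0,+,↻}^k` and a bit `a` such that the
`j`-th qubit of `C|t⟩` is left in the standard basis state `|a⟩`, i.e. the
amplitude of `C|t⟩` vanishes on every basis string whose `j`-th bit is not
`a`. -/
theorem clifford_trap_standard_basis_qubit (k : ℕ) (hk : 0 < k)
    (C : Matrix (Fin k → Fin 2) (Fin k → Fin 2) ℂ) (hC : IsClifford C)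
    (j : Fin k) :
    ∃ (t : Fin k → Fin 3) (a : Fin 2),
      ∀ x : Fin k → Fin 2, x j ≠ a → C.mulVec (ketTrap t) x = 0 := by
  obtain ⟨hU, hN⟩ := hC
  -- C is a unit
  have hU' : C * Cᴴ = 1 := mul_eq_one_comm.mp hU
  have hCu : IsUnit C := (Matrix.isUnit_iff_isUnit_det _).mpr (Matrix.isUnit_det_of_right_inverse hU')
  have hCHu : IsUnit Cᴴ := (Matrix.isUnit_iff_isUnit_det _).mpr (Matrix.isUnit_det_of_right_inverse hU)
  -- the Pauli group is a finite set
  set S : Set (Matrix (Fin k → Fin 2) (Fin k → Fin 2) ℂ) := {A | InPauliGroup A} with hS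
  have hSfin : S.Finite := by
    have hsub : S ⊆ Set.range (fun p : (Fin 4) × (Fin k → Fin 2) × (Fin k → Fin 2) =>
        (![1, Complex.I, -1, -Complex.I] p.1 : ℂ) • XZ k p.2.1 p.2.2) := by
      rintro A ⟨α, a, b, hα, rfl⟩
      simp only [Set.mem_insert_iff, Set.mem_singleton_iff] at hα
      rcases hα with rfl | rfl | rfl | rfl
      exacts [⟨(0, a, b), by simp⟩, ⟨(1, a, b), by simp⟩,
        ⟨(2, a, b), by simp⟩, ⟨(3, a, b), by simp⟩]
    exact (Set.finite_range _).subset hsub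
  have hmaps : Set.MapsTo (fun A => C * A * Cᴴ) S S := fun A hA => hN A hA
  have hinj : Set.InjOn (fun A => C * A * Cᴴ) S := by
    intro A _ B _ h
    simp only at h
    have h1 : A * Cᴴ = B * Cᴴ := hCu.mul_left_cancel (by rw [← mul_assoc, h, mul_assoc])
    exact hCHu.mul_right_cancel h1
  have hbij := (hSfin.injOn_iff_bijOn_of_mapsTo hmaps).mp hinj
  have hZS : Zat j ∈ S := ⟨1, 0, (fun i => if i = j then 1 else 0), by simp, by
    rw [one_smul, Zat_eq]⟩
  obtain ⟨P, hPS, hPZ⟩ := hbij.surjOn hZS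
  simp only at hPZ
  obtain ⟨α, a, b, hα, rfl⟩ := hPS
  -- the trap string and eigenvalue
  set t : Fin k → Fin 3 := fun i => trapIdx (a i) (b i) with ht
  set lam : ℂ := α * ∏ i, trapEig (a i) (b i) with hlam
  have heig : (α • XZ k a b).mulVec (ketTrap t) = lam • ketTrap t := by
    rw [Matrix.smul_mulVec, XZ_mulVec, smul_smul]
  have hcomm : Zat j * C = C * (α • XZ k a b) := by
    rw [← hPZ, mul_assoc, mul_assoc, hU, mul_one]
  set v : (Fin k → Fin 2) → ℂ := C.mulVec (ketTrap t) with hv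
  have hvv : (Zat j).mulVec v = lam • v := by
    rw [hv, Matrix.mulVec_mulVec, hcomm, ← Matrix.mulVec_mulVec, heig, Matrix.mulVec_smul]
  have hpt : ∀ x : Fin k → Fin 2, (if x j = 1 then (-1 : ℂ) else 1) * v x = lam * v x := by
    intro x
    have h := congrFun hvv x
    simpa [Zat, Matrix.mulVec, dotProduct, ite_mul] using h
  refine ⟨t, if lam = 1 then 0 else 1, ?_⟩
  intro x hx
  by_cases hl : lam = 1
  · rw [if_pos hl] at hx
    have hx1 : x j = 1 := (fin2cases (x j)).resolve_left hx
    have h := hpt x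
    rw [hl, if_pos hx1, one_mul] at h
    linear_combination (-1/2 : ℂ) * h
  · rw [if_neg hl] at hx
    have hx0 : x j = 0 := (fin2cases (x j)).resolve_right hx
    have h := hpt x
    rw [hx0, if_neg (by decide : (0 : Fin 2) ≠ 1), one_mul] at h
    have h2 : (1 - lam) * v x = 0 := by linear_combination h
    rcases mul_eq_zero.mp h2 with h3 | h3
    · exact absurd (by linear_combination -h3) hl
    · exact h3
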